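/- Let λ > 0 and let u(x, y) = λ · Im √(x + iy) (principal square root) on the slit plane ℝ² \ {(x, 0) : x ≤ 0}. Then for every r > 0 the Dirichlet energy of u on the slit disc satisfies ∫_{B_r \ {(x,0): x ≤ 0}} ‖∇u‖² dx dy = λ² π r / 2, where B_r is the open disc of radius r centered at the origin. Consequently, for every r ∈ (0, 1] the Dirichlet energy term λ²πr/2 equals the crack-length term λ²(π/2)·𝓗¹(Γ₀ ∩ B_r), where Γ₀ = {(x, 0) : −1 ≤ x ≤ 0} and 𝓗¹ is the 1-dimensional Hausdorff measure. -/

import Mathlib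

open MeasureTheory
open scoped ENNReal

section Aux

open Complex Set

private lemma grad_sqrt_im_aux (lam : ℝ) {z : ℂ} (hz : z ∈ Complex.slitPlane) :
    HasGradientAt (fun z : ℂ => lam * ((z ^ ((1 : ℂ)/2)).im))
      (lam • (Complex.I * (starRingEnd ℂ) (((1:ℂ)/2) * z ^ ((1:ℂ)/2 - 1)))) z := by
  set d : ℂ := ((1:ℂ)/2) * z ^ ((1:ℂ)/2 - 1) with hd
  have hf : HasDerivAt (fun z : ℂ => z ^ ((1 : ℂ)/2)) d z :=
    (Complex.hasStrictDerivAt_cpow_const (c := (1 : ℂ)/2) hz).hasDerivAt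
  have h1 : HasFDerivAt (fun z : ℂ => z ^ ((1 : ℂ)/2))
      ((ContinuousLinearMap.smulRight (1 : ℂ →L[ℂ] ℂ) d).restrictScalars ℝ) z :=
    hf.hasFDerivAt.restrictScalars ℝ
  have h2 : HasFDerivAt (fun z : ℂ => lam * ((z ^ ((1 : ℂ)/2)).im))
      (lam • (Complex.imCLM.comp
        ((ContinuousLinearMap.smulRight (1 : ℂ →L[ℂ] ℂ) d).restrictScalars ℝ))) z :=
    (Complex.imCLM.hasFDerivAt.comp z h1).const_mul lam
  have he : (InnerProductSpace.toDual ℝ ℂ) (lam • (Complex.I * (starRingEnd ℂ) d)) =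
      lam • (Complex.imCLM.comp
        ((ContinuousLinearMap.smulRight (1 : ℂ →L[ℂ] ℂ) d).restrictScalars ℝ)) := by
    ext h
    simp [InnerProductSpace.toDual_apply_apply, Complex.inner, Complex.mul_re, Complex.mul_im]
    ring
  unfold HasGradientAt HasGradientAtFilter
  rw [he]
  exact h2

private lemma norm_grad_sq_aux (lam : ℝ) (hlam : 0 < lam) {z : ℂ} (hz : z ∈ Complex.slitPlane) :
    ‖gradient (fun z : ℂ => lam * ((z ^ ((1 : ℂ)/2)).im)) z‖ ^ 2
      = lam ^ 2 / 4 * ‖z‖⁻¹ := by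
  rw [(grad_sqrt_im_aux lam hz).gradient]
  have hz0 : z ≠ 0 := Complex.slitPlane_ne_zero hz
  have h : ((1:ℂ)/2 - 1) = ((-(1/2) : ℝ) : ℂ) := by norm_num
  rw [norm_smul, norm_mul]
  simp only [Real.norm_eq_abs, Complex.norm_I, one_mul, Complex.norm_conj, map_mul, norm_mul, h,
    Complex.norm_cpow_real]
  rw [mul_pow, mul_pow, ← Real.rpow_natCast (‖z‖ ^ (-(1/2):ℝ)) 2,
    ← Real.rpow_mul (norm_nonneg z)]
  norm_num
  rw [Real.rpow_neg_one]
  ring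

private lemma slit_null_aux : volume {z : ℂ | z.im = 0 ∧ z.re ≤ 0} = 0 := by
  have hsub : {z : ℂ | z.im = 0 ∧ z.re ≤ 0} ⊆ (Submodule.span ℝ {(1:ℂ)} : Submodule ℝ ℂ) := by
    rintro z ⟨h1, _⟩
    refine Submodule.mem_span_singleton.2 ⟨z.re, ?_⟩
    simp [Complex.ext_iff, h1]
  refine measure_mono_null hsub (Measure.addHaar_submodule _ _ ?_)
  intro htop
  have := htop ▸ Submodule.mem_top (R := ℝ) (x := Complex.I)
  rw [Submodule.mem_span_singleton] at this
  obtain ⟨a, ha⟩ := this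
  simp [Complex.ext_iff] at ha

private lemma ball_inv_integral_aux (c r : ℝ) (hr : 0 < r) :
    ∫ z in Metric.ball (0 : ℂ) r, c * ‖z‖⁻¹ ∂volume = 2 * Real.pi * (c * r) := by
  have key : ∀ x : ℂ, (Metric.ball (0:ℂ) r).indicator (fun z => c * ‖z‖⁻¹) x
      = (Set.Iio r).indicator (fun y : ℝ => c * y⁻¹) ‖x‖ := by
    intro x
    by_cases hx : ‖x‖ < r <;>
      simp [Set.indicator, mem_ball_zero_iff, hx]
  rw [← integral_indicator measurableSet_ball]
  calc ∫ x, (Metric.ball (0:ℂ) r).indicator (fun z => c * ‖z‖⁻¹) x ∂volume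
      = ∫ x : ℂ, (Set.Iio r).indicator (fun y : ℝ => c * y⁻¹) ‖x‖ ∂volume := by
        simp_rw [key]
    _ = (Module.finrank ℝ ℂ) • (volume (Metric.ball (0:ℂ) 1)).toReal •
          ∫ y in Set.Ioi (0:ℝ), y ^ (Module.finrank ℝ ℂ - 1) •
            (Set.Iio r).indicator (fun y : ℝ => c * y⁻¹) y :=
        integral_fun_norm_addHaar volume _
    _ = 2 * Real.pi * (c * r) := by
        rw [Complex.finrank_real_complex]
        have h1 : ∀ y : ℝ, y ^ (2-1) • (Set.Iio r).indicator (fun y : ℝ => c * y⁻¹) y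
            = (Set.Iio r).indicator (fun y : ℝ => y * (c * y⁻¹)) y := by
          intro y
          by_cases hy : y < r <;> simp [Set.indicator, hy]
        simp_rw [h1]
        rw [setIntegral_indicator measurableSet_Iio, Set.Ioi_inter_Iio]
        have h2 : ∫ y in Set.Ioo (0:ℝ) r, y * (c * y⁻¹) = c * r := by
          rw [setIntegral_congr_fun measurableSet_Ioo
            (g := fun _ => c) (by intro y hy; field_simp [ne_of_gt hy.1])]
          simp [Real.volume_Ioo, hr.le]
          ring
        rw [h2]
        have h3 : (volume (Metric.ball (0:ℂ) 1)).toReal = Real.pi := by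
          simp [Complex.volume_ball]
        rw [h3]
        simp
        ring

private lemma hausdorff_seg_aux (r : ℝ) (hr : r ∈ Set.Ioc (0:ℝ) 1) :
    (μH[1] ({z : ℂ | z.im = 0 ∧ -1 ≤ z.re ∧ z.re ≤ 0} ∩ Metric.ball (0 : ℂ) r)).toReal = r := by
  obtain ⟨hr0, hr1⟩ := hr
  have hset : {z : ℂ | z.im = 0 ∧ -1 ≤ z.re ∧ z.re ≤ 0} ∩ Metric.ball (0 : ℂ) r
      = (fun x : ℝ => (x : ℂ)) '' Set.Ioc (-r) 0 := by
    ext z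
    simp only [Set.mem_inter_iff, Set.mem_setOf_eq, mem_ball_zero_iff, Set.mem_image,
      Set.mem_Ioc]
    constructor
    · rintro ⟨⟨him, _, hre0⟩, hball⟩
      refine ⟨z.re, ⟨?_, hre0⟩, by simp [Complex.ext_iff, him]⟩
      have : ‖z‖ = |z.re| := by
        rw [Complex.norm_def, Complex.normSq_apply, him]
        rw [mul_zero, add_zero, ← sq]; exact Real.sqrt_sq_eq_abs _
      rw [this, abs_of_nonpos hre0] at hball
      linarith
    · rintro ⟨x, ⟨hx1, hx2⟩, rfl⟩
      refine ⟨⟨by simp, by simp; linarith, by simpa using hx2⟩, ?_⟩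
      rw [Complex.norm_real, Real.norm_eq_abs, abs_of_nonpos hx2]
      linarith
  rw [hset, Complex.isometry_ofReal.hausdorffMeasure_image (Or.inl zero_le_one),
    MeasureTheory.hausdorffMeasure_real, Real.volume_Ioc]
  simp [hr0.le]

end Aux

/-- Let `λ > 0` and `u(z) = λ · Im √z` (principal square root) on the slit plane
`ℂ \ {z : Im z = 0, Re z ≤ 0}`. Then for every `r > 0` the Dirichlet energy of `u` on the
slit disc of radius `r` equals `λ²πr/2`; consequently, for every `r ∈ (0,1]` it equals the
crack-length term `λ²(π/2)·𝓗¹(Γ₀ ∩ B_r)` where `Γ₀ = {(x,0) : −1 ≤ x ≤ 0}`. -/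
theorem dirichlet_energy_sqrt_slit_disc (lam : ℝ) (hlam : 0 < lam) :
    let u : ℂ → ℝ := fun z => lam * ((z ^ ((1 : ℂ)/2)).im)
    let slit : Set ℂ := {z | z.im = 0 ∧ z.re ≤ 0}
    let Γ₀ : Set ℂ := {z | z.im = 0 ∧ -1 ≤ z.re ∧ z.re ≤ 0}
    (∀ r : ℝ, 0 < r →
      ∫ z in (Metric.ball (0 : ℂ) r \ slit), ‖gradient u z‖ ^ 2 ∂volume =
        lam ^ 2 * Real.pi * r / 2) ∧
    (∀ r : ℝ, r ∈ Set.Ioc (0 : ℝ) 1 →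
      lam ^ 2 * Real.pi * r / 2 =
        lam ^ 2 * (Real.pi / 2) * (μH[1] (Γ₀ ∩ Metric.ball (0 : ℂ) r)).toReal) := by
  intro u slit Γ₀
  constructor
  · intro r hr
    have hslitmeas : MeasurableSet slit :=
      ((isClosed_singleton.preimage Complex.continuous_im).inter
        (isClosed_Iic.preimage Complex.continuous_re)).measurableSet
    have hcongr : ∫ z in (Metric.ball (0 : ℂ) r \ slit), ‖gradient u z‖ ^ 2 ∂volume
        = ∫ z in (Metric.ball (0 : ℂ) r \ slit), lam ^ 2 / 4 * ‖z‖⁻¹ ∂volume := by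
      refine setIntegral_congr_fun (measurableSet_ball.diff hslitmeas) ?_
      rintro z ⟨_, hz2⟩
      have hz : z ∈ Complex.slitPlane := by
        by_contra hc
        simp only [Complex.slitPlane, Set.mem_setOf_eq, not_or, not_lt, ne_eq, not_not] at hc
        exact hz2 ⟨hc.2, hc.1⟩
      exact norm_grad_sq_aux lam hlam hz
    have hae : (Metric.ball (0 : ℂ) r \ slit : Set ℂ) =ᵐ[volume] Metric.ball (0 : ℂ) r :=
      MeasureTheory.diff_ae_eq_self.2
        (measure_mono_null Set.inter_subset_right slit_null_aux)
    rw [hcongr, setIntegral_congr_set hae, ball_inv_integral_aux _ r hr]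
    ring
  · intro r hr
    rw [hausdorff_seg_aux r hr]
    ring
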